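/- Let λ be a nonnegative integer, θ a real number with sin θ ≠ 0, and t a real number with |t| < 1. Then the complex number e^{iλθ}/((1 − e^{−2iθ})(1 − t·e^{2iθ})) + e^{−iλθ}/((1 − e^{2iθ})(1 − t·e^{−2iθ})) is real and equals Θ_λ(θ). (This identifies the SU(2) specialization of the general deformed character with its trigonometric form.) -/

import Mathlib

/-- The SU(2) deformed character of weight `l` at parameter `t` and angle `θ`:
`Θ_λ(θ) = (sin((λ+1)θ) − t·sin((λ−1)θ)) / (sin θ · (1 − 2t·cos(2θ) + t²))`,
where `λ − 1` is interpreted as an integer. -/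
noncomputable def Theta (t θ : ℝ) (l : ℕ) : ℝ :=
  (Real.sin (((l : ℝ) + 1) * θ) - t * Real.sin ((((l : ℤ) - 1 : ℤ) : ℝ) * θ)) /
    (Real.sin θ * (1 - 2 * t * Real.cos (2 * θ) + t ^ 2))

/-- Auxiliary algebraic identity: for `z * w = 1` the partial-fraction sum
equals the closed trigonometric-style ratio. -/
lemma aux_frac (u v z w t : ℂ) (hzw : z * w = 1)
    (h1 : (1 - w ^ 2) * (1 - t * z ^ 2) ≠ 0)
    (h2 : (1 - z ^ 2) * (1 - t * w ^ 2) ≠ 0)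
    (h3 : (z - w) * (1 - 2 * t * ((z ^ 2 + w ^ 2) / 2) + t ^ 2) ≠ 0) :
    u / ((1 - w ^ 2) * (1 - t * z ^ 2)) + v / ((1 - z ^ 2) * (1 - t * w ^ 2))
      = ((u * z - v * w) - t * (u * w - v * z)) /
        ((z - w) * (1 - 2 * t * ((z ^ 2 + w ^ 2) / 2) + t ^ 2)) := by
  rw [div_add_div _ _ h1 h2, div_eq_div_iff (mul_ne_zero h1 h2) h3]
  linear_combination (v * w * t ^ 2 - v * w ^ 3 * t ^ 2 - v * z + v * z * t - v * z * t ^ 2 +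
    v * z * w ^ 2 + v * z * w ^ 2 * t ^ 2 - v * z * w ^ 4 * t - v * z ^ 2 * w * t ^ 2 -
    v * z ^ 2 * w * t ^ 3 + v * z ^ 2 * w ^ 3 * t ^ 2 + v * z ^ 2 * w ^ 3 * t ^ 3 +
    v * z ^ 3 * t - v * z ^ 3 * t ^ 2 + v * z ^ 3 * t ^ 3 - v * z ^ 3 * w ^ 2 * t -
    v * z ^ 3 * w ^ 2 * t ^ 3 + v * z ^ 3 * w ^ 4 * t ^ 2 + v * z ^ 4 * w * t ^ 3 -
    v * z ^ 4 * w ^ 3 * t ^ 3 + u * w - u * w * t + u * w * t ^ 2 - u * w ^ 3 * t +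
    u * w ^ 3 * t ^ 2 - u * w ^ 3 * t ^ 3 - u * z * t ^ 2 + u * z * w ^ 2 * t ^ 2 +
    u * z * w ^ 2 * t ^ 3 - u * z * w ^ 4 * t ^ 3 - u * z ^ 2 * w - u * z ^ 2 * w * t ^ 2 +
    u * z ^ 2 * w ^ 3 * t + u * z ^ 2 * w ^ 3 * t ^ 3 + u * z ^ 3 * t ^ 2 -
    u * z ^ 3 * w ^ 2 * t ^ 2 - u * z ^ 3 * w ^ 2 * t ^ 3 + u * z ^ 3 * w ^ 4 * t ^ 3 +
    u * z ^ 4 * w * t - u * z ^ 4 * w ^ 3 * t ^ 2) * hzw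

/-- Cancel a common auxiliary factor `c` in numerator and denominator. -/
lemma aux_cancel (X Y S D t c : ℂ) (hc : c ≠ 0) (hS : S ≠ 0) (hD : D ≠ 0) :
    (X / c - t * (Y / c)) / (S / c * D) = (X - t * Y) / (S * D) := by
  field_simp

set_option maxHeartbeats 1000000 in
/-- The SU(2) specialization of the general deformed character agrees with its
trigonometric form: for `λ ∈ ℕ`, `sin θ ≠ 0` and `|t| < 1`,
`e^{iλθ}/((1 − e^{−2iθ})(1 − t e^{2iθ})) + e^{−iλθ}/((1 − e^{2iθ})(1 − t e^{−2iθ}))`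
is real and equals `Θ_λ(θ)`. -/
theorem deformed_character_complex_form (l : ℕ) (θ t : ℝ)
    (hθ : Real.sin θ ≠ 0) (ht : |t| < 1) :
    Complex.exp (Complex.I * (l : ℂ) * (θ : ℂ)) /
        ((1 - Complex.exp (-2 * Complex.I * (θ : ℂ))) *
          (1 - (t : ℂ) * Complex.exp (2 * Complex.I * (θ : ℂ))))
      + Complex.exp (-Complex.I * (l : ℂ) * (θ : ℂ)) /
        ((1 - Complex.exp (2 * Complex.I * (θ : ℂ))) *
          (1 - (t : ℂ) * Complex.exp (-2 * Complex.I * (θ : ℂ))))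
    = (Theta t θ l : ℂ) := by
  have abslt : -1 < t ∧ t < 1 := abs_lt.mp ht
  -- key formulas for sin and cos in terms of exp
  have ksin : ∀ x : ℂ, Complex.sin x
      = (Complex.exp (x * Complex.I) - Complex.exp (-x * Complex.I)) / (2 * Complex.I) := by
    intro x
    have e : -x * Complex.I = (-x) * Complex.I := by ring
    rw [e, Complex.exp_mul_I, Complex.exp_mul_I, Complex.cos_neg, Complex.sin_neg,
      eq_div_iff (by simp [Complex.I_ne_zero] : (2 : ℂ) * Complex.I ≠ 0)]
    ring
  have kcos : ∀ x : ℂ, Complex.cos x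
      = (Complex.exp (x * Complex.I) + Complex.exp (-x * Complex.I)) / 2 := by
    intro x
    have e : -x * Complex.I = (-x) * Complex.I := by ring
    rw [e, Complex.exp_mul_I, Complex.exp_mul_I, Complex.cos_neg, Complex.sin_neg]
    ring
  set z : ℂ := Complex.exp (Complex.I * θ) with hzdef
  have hz : z ≠ 0 := Complex.exp_ne_zero _
  have habs : ‖z‖ = 1 := by
    rw [hzdef, Complex.norm_exp]; simp
  have hsθ : (Real.sin θ : ℂ) ≠ 0 := Complex.ofReal_ne_zero.mpr hθ
  have hsθ' : Complex.sin (θ : ℂ) ≠ 0 := by rw [← Complex.ofReal_sin]; exact hsθ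
  have hzc : z = Complex.cos θ + Complex.sin θ * Complex.I := by
    rw [hzdef, ← Complex.exp_mul_I]; ring_nf
  have hzinv : z⁻¹ = Complex.cos θ - Complex.sin θ * Complex.I := by
    rw [hzdef, ← Complex.exp_neg]
    have e : -(Complex.I * (θ:ℂ)) = (-θ : ℂ) * Complex.I := by ring
    rw [e, Complex.exp_mul_I, Complex.cos_neg, Complex.sin_neg]; ring
  have hdiff : z - z⁻¹ = 2 * Complex.sin θ * Complex.I := by
    rw [hzinv, hzc]; ring
  have hdiff' : z - z⁻¹ ≠ 0 := by
    rw [hdiff]; simp [hsθ', Complex.I_ne_zero]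
  have hz2 : 1 - z ^ 2 ≠ 0 := by
    have e : 1 - z ^ 2 = -z * (z - z⁻¹) := by field_simp; ring
    rw [e, hdiff]
    simp [hz, hsθ', Complex.I_ne_zero]
  have hz2' : 1 - (z ^ 2)⁻¹ ≠ 0 := by
    have e : 1 - (z ^ 2)⁻¹ = (z - z⁻¹) * z⁻¹ := by field_simp
    rw [e, hdiff]
    simp [hz, hsθ', Complex.I_ne_zero]
  have htz : 1 - (t : ℂ) * z ^ 2 ≠ 0 := by
    intro h
    have h1 : (t : ℂ) * z ^ 2 = 1 := by linear_combination -h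
    have h2 := congrArg Norm.norm h1
    rw [norm_mul, norm_pow, habs, Complex.norm_real, norm_one] at h2
    simp at h2
    linarith [abs_nonneg t]
  have htz' : 1 - (t : ℂ) * (z ^ 2)⁻¹ ≠ 0 := by
    intro h
    have h1 : (t : ℂ) * (z ^ 2)⁻¹ = 1 := by linear_combination -h
    have h2 := congrArg Norm.norm h1
    rw [norm_mul, norm_inv, norm_pow, habs, Complex.norm_real, norm_one] at h2
    simp at h2
    linarith [abs_nonneg t]
  -- exponentials in terms of z
  have e1 : Complex.exp (Complex.I * (l : ℂ) * θ) = z ^ l := by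
    rw [hzdef, ← Complex.exp_nat_mul]; congr 1; push_cast; ring
  have e2 : Complex.exp (-Complex.I * (l : ℂ) * θ) = (z ^ l)⁻¹ := by
    rw [← e1, ← Complex.exp_neg]; congr 1; ring
  have e3 : Complex.exp (2 * Complex.I * (θ : ℂ)) = z ^ 2 := by
    rw [hzdef, ← Complex.exp_nat_mul]; congr 1; push_cast; ring
  have e4 : Complex.exp (-2 * Complex.I * (θ : ℂ)) = (z ^ 2)⁻¹ := by
    rw [← e3, ← Complex.exp_neg]; congr 1; ring
  have e5 : Complex.exp ((((l : ℂ) + 1) * θ) * Complex.I) = z ^ l * z := by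
    rw [← e1, hzdef, ← Complex.exp_add]; congr 1; ring
  have e6 : Complex.exp ((-(((l : ℂ) + 1) * θ)) * Complex.I) = (z ^ l * z)⁻¹ := by
    rw [← e5, ← Complex.exp_neg]; congr 1; ring
  have e7 : Complex.exp ((((l : ℂ) - 1) * θ) * Complex.I) = z ^ l * z⁻¹ := by
    rw [← e1, ← Complex.exp_neg, ← Complex.exp_add]; congr 1; ring
  have e8 : Complex.exp ((-(((l : ℂ) - 1) * θ)) * Complex.I) = (z ^ l)⁻¹ * z := by
    rw [← e2, hzdef, ← Complex.exp_add]; congr 1; ring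
  have e9 : Complex.exp ((θ : ℂ) * Complex.I) = z := by
    rw [hzdef]; congr 1; ring
  have e10 : Complex.exp ((-θ : ℂ) * Complex.I) = z⁻¹ := by
    rw [← e9, ← Complex.exp_neg]; congr 1; ring
  have e11 : Complex.exp (((2 : ℂ) * θ) * Complex.I) = z ^ 2 := by
    rw [← e3]; congr 1; ring
  have e12 : Complex.exp ((-((2 : ℂ) * θ)) * Complex.I) = (z ^ 2)⁻¹ := by
    rw [← e4]; congr 1; ring
  -- rewrite the goal
  rw [e1, e2, e3, e4]
  rw [Theta]
  push_cast
  rw [ksin, ksin, ksin, kcos]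
  rw [e5, e6, e7, e8, e9, e10, e11, e12]
  simp only [mul_inv, ← inv_pow]
  have h2I : (2 : ℂ) * Complex.I ≠ 0 := by simp [Complex.I_ne_zero]
  have hD : (1 - 2 * (t : ℂ) * ((z ^ 2 + z⁻¹ ^ 2) / 2) + (t : ℂ) ^ 2) ≠ 0 := by
    have e : (1 - 2 * (t:ℂ) * ((z ^ 2 + z⁻¹ ^ 2) / 2) + (t:ℂ) ^ 2)
        = (1 - t * z ^ 2) * (1 - t * (z ^ 2)⁻¹) := by
      field_simp
      ring
    rw [e]
    exact mul_ne_zero htz htz'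
  rw [aux_cancel _ _ _ _ _ _ h2I hdiff' hD]
  have hw2 : (z ^ 2)⁻¹ = z⁻¹ ^ 2 := by rw [inv_pow]
  exact aux_frac (z ^ l) (z⁻¹ ^ l) z z⁻¹ t (mul_inv_cancel₀ hz)
    (by rw [← hw2]; exact mul_ne_zero hz2' htz)
    (by rw [← hw2]; exact mul_ne_zero hz2 htz')
    (mul_ne_zero hdiff' hD)
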